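/- Let F = X₀³ + X₁³ + X₂³ + X₀²X₁ + X₁²X₂ + X₂²X₀ + X₀X₁X₂ + X₂²X₃ + X₂X₃² be the cubic form over 𝔽₂ = ZMod 2 defining the smooth cubic surface S ⊂ P³ with a unique 𝔽₂-point. Then S contains no rational curve of degree ≤ 8 defined over 𝔽₂: for every d with 1 ≤ d ≤ 8 there do not exist homogeneous binary forms f₀, f₁, f₂, f₃ of degree d over ZMod 2 with no common nonzero zero over the algebraic closure of ZMod 2 such that substituting the f_i into F yields the identically zero polynomial. -/

import Mathlib

open MvPolynomial

/-- The cubic form over `𝔽₂` of Proposition 2.1. -/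
noncomputable def SwDCubic : MvPolynomial (Fin 4) (ZMod 2) :=
  X 0 ^ 3 + X 1 ^ 3 + X 2 ^ 3 + X 0 ^ 2 * X 1 + X 1 ^ 2 * X 2 + X 2 ^ 2 * X 0 +
    X 0 * X 1 * X 2 + X 2 ^ 2 * X 3 + X 2 * X 3 ^ 2

namespace SwDAux
section
open Polynomial



/-- dehomogenization at t = 1 -/
noncomputable def Φ : MvPolynomial (Fin 2) (ZMod 2) →ₐ[ZMod 2] Polynomial (ZMod 2) :=
  MvPolynomial.aeval ![Polynomial.X, 1]

/-- dehomogenization at s = 1 -/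
noncomputable def Ψ : MvPolynomial (Fin 2) (ZMod 2) →ₐ[ZMod 2] Polynomial (ZMod 2) :=
  MvPolynomial.aeval ![1, Polynomial.X]

lemma degree_fin2 (m : Fin 2 →₀ ℕ) : m.degree = m 0 + m 1 := by
  rw [Finsupp.degree_eq_weight_one]
  rw [Finsupp.weight_apply, Finsupp.sum_fintype]
  · simp [Fin.sum_univ_two]
  · intro; simp

lemma Phi_monomial (m : Fin 2 →₀ ℕ) (c : ZMod 2) :
    Φ (MvPolynomial.monomial m c) = Polynomial.C c * Polynomial.X ^ (m 0) := by
  rw [Φ, MvPolynomial.aeval_monomial, Finsupp.prod_pow]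
  simp [Fin.prod_univ_two, Polynomial.algebraMap_eq]

lemma Psi_monomial (m : Fin 2 →₀ ℕ) (c : ZMod 2) :
    Ψ (MvPolynomial.monomial m c) = Polynomial.C c * Polynomial.X ^ (m 1) := by
  rw [Ψ, MvPolynomial.aeval_monomial, Finsupp.prod_pow]
  simp [Fin.prod_univ_two, Polynomial.algebraMap_eq]

lemma reflect_sum {ι : Type*} (s : Finset ι) (g : ι → Polynomial (ZMod 2)) (N : ℕ) :
    reflect N (∑ i ∈ s, g i) = ∑ i ∈ s, reflect N (g i) := by
  classical
  induction s using Finset.induction_on with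
  | empty => simp [reflect_zero]
  | insert _ _ h ih => simp [Finset.sum_insert h, reflect_add, ih]

lemma natDegree_Phi_le {f : MvPolynomial (Fin 2) (ZMod 2)} {d : ℕ}
    (hf : f.IsHomogeneous d) : (Φ f).natDegree ≤ d := by
  conv_lhs => rw [← MvPolynomial.support_sum_monomial_coeff f]
  rw [map_sum]
  apply Polynomial.natDegree_sum_le_of_forall_le
  intro m hm
  rw [Phi_monomial]
  refine le_trans (Polynomial.natDegree_C_mul_X_pow_le _ _) ?_
  have hd : m.degree = d := by
    by_contra h
    exact (MvPolynomial.mem_support_iff.mp hm) (hf.coeff_eq_zero h)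
  rw [degree_fin2] at hd
  omega

lemma reflect_Phi {f : MvPolynomial (Fin 2) (ZMod 2)} {d : ℕ}
    (hf : f.IsHomogeneous d) : reflect d (Φ f) = Ψ f := by
  conv_lhs => rw [← MvPolynomial.support_sum_monomial_coeff f]
  conv_rhs => rw [← MvPolynomial.support_sum_monomial_coeff f]
  rw [map_sum, map_sum, reflect_sum]
  apply Finset.sum_congr rfl
  intro m hm
  have hd : m.degree = d := by
    by_contra h
    exact (MvPolynomial.mem_support_iff.mp hm) (hf.coeff_eq_zero h)
  rw [degree_fin2] at hd
  rw [Phi_monomial, Psi_monomial, reflect_C_mul, reflect_monomial,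
    Polynomial.revAt_le (by omega : m 0 ≤ d), (by omega : d - m 0 = m 1)]



lemma zmod2_cases : ∀ x : ZMod 2, x = 0 ∨ x = 1 := by decide

/-- The norm form of 𝔽₈/𝔽₂ is anisotropic over 𝔽₂(X). -/
lemma norm_aniso (P Q : Polynomial (ZMod 2))
    (h : P ^ 3 + P ^ 2 * Q + Q ^ 3 = 0) : P = 0 ∧ Q = 0 := by
  rcases eq_or_ne Q 0 with hQ | hQ
  · subst hQ
    simp only [add_zero, mul_zero] at h
    have : P ^ 3 = 0 := by linear_combination h
    exact ⟨pow_eq_zero_iff (by norm_num) |>.mp this, rfl⟩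
  · exfalso
    set g := gcd P Q with hgdef
    have hg : g ≠ 0 := gcd_ne_zero_of_right hQ
    set A := P / g with hA
    set B := Q / g with hB
    have hPg : g * A = P := EuclideanDomain.mul_div_cancel' hg (gcd_dvd_left P Q)
    have hQg : g * B = Q := EuclideanDomain.mul_div_cancel' hg (gcd_dvd_right P Q)
    have hcop : IsCoprime A B := isCoprime_div_gcd_div_gcd hQ
    have h' : g ^ 3 * (A ^ 3 + A ^ 2 * B + B ^ 3) = 0 := by
      rw [← hPg, ← hQg] at h
      linear_combination h
    have hN : A ^ 3 + A ^ 2 * B + B ^ 3 = 0 :=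
      (mul_eq_zero.mp h').resolve_left (pow_ne_zero 3 hg)
    have hBd : B ∣ A ^ 3 := by
      have e : A ^ 3 = (A ^ 3 + A ^ 2 * B + B ^ 3) - (A ^ 2 * B + B ^ 3) := by ring
      rw [hN, zero_sub] at e
      rw [e]
      exact Dvd.dvd.neg_right ⟨A ^ 2 + B ^ 2, by ring⟩
    have hAd : A ∣ B ^ 3 := by
      have e : B ^ 3 = (A ^ 3 + A ^ 2 * B + B ^ 3) - (A ^ 3 + A ^ 2 * B) := by ring
      rw [hN, zero_sub] at e
      rw [e]
      exact Dvd.dvd.neg_right ⟨A ^ 2 + A * B, by ring⟩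
    have hBu : IsUnit B := (hcop.symm.pow_right (n := 3)).isUnit_of_dvd' dvd_rfl hBd
    have hAu : IsUnit A := (hcop.pow_right (n := 3)).isUnit_of_dvd' dvd_rfl hAd
    obtain ⟨a, ha, haA⟩ := Polynomial.isUnit_iff.mp hAu
    obtain ⟨b, hb, hbB⟩ := Polynomial.isUnit_iff.mp hBu
    have ha1 : a = 1 := (zmod2_cases a).resolve_left (by rintro rfl; exact ha.ne_zero rfl)
    have hb1 : b = 1 := (zmod2_cases b).resolve_left (by rintro rfl; exact hb.ne_zero rfl)
    rw [← haA, ← hbB, ha1, hb1, map_one] at hN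
    have : (1 : Polynomial (ZMod 2)) + (1 + 1) = 0 := by linear_combination hN
    rw [CharTwo.add_self_eq_zero, add_zero] at this
    exact one_ne_zero this

/-- prime-cube divisibility extraction from the cubic identity -/
lemma cube_dvd (π P0 P1 P2 P3 : Polynomial (ZMod 2)) (hπ : Prime π)
    (h0 : π ∣ P0) (h1 : π ∣ P1) (h2 : π ∣ P2) (h3 : ¬ π ∣ P3)
    (hid : P0 ^ 3 + P1 ^ 3 + P2 ^ 3 + P0 ^ 2 * P1 + P1 ^ 2 * P2 + P2 ^ 2 * P0 +
      P0 * P1 * P2 + P2 ^ 2 * P3 + P2 * P3 ^ 2 = 0) : π ^ 3 ∣ P2 := by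
  obtain ⟨A0, rfl⟩ := h0
  obtain ⟨A1, rfl⟩ := h1
  obtain ⟨A2, rfl⟩ := h2
  have key : (π * A2) * (P3 * (π * A2 + P3)) =
      π ^ 3 * (-(A0 ^ 3 + A1 ^ 3 + A2 ^ 3 + A0 ^ 2 * A1 + A1 ^ 2 * A2 + A2 ^ 2 * A0 +
        A0 * A1 * A2)) := by
    linear_combination hid
  have hnd : ¬ π ∣ P3 * (π * A2 + P3) := by
    intro hd
    rcases hπ.dvd_mul.mp hd with h | h
    · exact h3 h
    · exact h3 ((dvd_add_right (Dvd.intro _ rfl)).mp h)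
  exact hπ.pow_dvd_of_dvd_mul_right 3 hnd ⟨_, key⟩




lemma eval_Phi (r : ZMod 2) (p : MvPolynomial (Fin 2) (ZMod 2)) :
    Polynomial.eval r (Φ p) = MvPolynomial.eval ![r, 1] p := by
  have h : (Polynomial.evalRingHom r).comp
      (Φ : MvPolynomial (Fin 2) (ZMod 2) →+* Polynomial (ZMod 2)) =
      MvPolynomial.eval ![r, 1] := by
    apply MvPolynomial.ringHom_ext
    · intro a; simp [Φ]
    · intro i; fin_cases i <;> simp [Φ]
  exact RingHom.congr_fun h p

lemma eval_Psi (r : ZMod 2) (p : MvPolynomial (Fin 2) (ZMod 2)) :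
    Polynomial.eval r (Ψ p) = MvPolynomial.eval ![1, r] p := by
  have h : (Polynomial.evalRingHom r).comp
      (Ψ : MvPolynomial (Fin 2) (ZMod 2) →+* Polynomial (ZMod 2)) =
      MvPolynomial.eval ![1, r] := by
    apply MvPolynomial.ringHom_ext
    · intro a; simp [Ψ]
    · intro i; fin_cases i <;> simp [Ψ]
  exact RingHom.congr_fun h p

lemma evalK_Phi {K : Type*} [CommRing K] (φ : ZMod 2 →+* K) (r : K)
    (p : MvPolynomial (Fin 2) (ZMod 2)) :
    MvPolynomial.eval ![r, 1] (MvPolynomial.map φ p) =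
      Polynomial.eval r (Polynomial.map φ (Φ p)) := by
  have h : (MvPolynomial.eval ![r, 1]).comp (MvPolynomial.map φ) =
      (Polynomial.evalRingHom r).comp ((Polynomial.mapRingHom φ).comp
        (Φ : MvPolynomial (Fin 2) (ZMod 2) →+* Polynomial (ZMod 2))) := by
    apply MvPolynomial.ringHom_ext
    · intro a; simp [Φ]
    · intro i; fin_cases i <;> simp [Φ]
  exact RingHom.congr_fun h p


end
end SwDAux

open SwDAux in
/-- The smooth cubic surface over `𝔽₂` with a unique rational point contains no
rational curve of degree at most 8 defined over `𝔽₂`. -/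
theorem SwDCubic_no_low_degree_rational_curve (d : ℕ) (hd1 : 1 ≤ d) (hd8 : d ≤ 8) :
    ¬ ∃ f : Fin 4 → MvPolynomial (Fin 2) (ZMod 2),
        (∀ i, (f i).IsHomogeneous d) ∧
        (∀ y : Fin 2 → AlgebraicClosure (ZMod 2),
          (∀ i, eval y ((f i).map (algebraMap (ZMod 2) (AlgebraicClosure (ZMod 2)))) = 0) →
          y = 0) ∧
        bind₁ f SwDCubic = 0 := by
  rintro ⟨f, hhom, hnz, hb⟩
  simp only [SwDCubic, map_add, map_mul, map_pow, bind₁_X_right] at hb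
  set K := AlgebraicClosure (ZMod 2) with hK
  set φ : ZMod 2 →+* K := algebraMap (ZMod 2) K with hφ
  -- no common zero among the `f i` at a nonzero 𝔽₂-point
  have hcz : ∀ v : Fin 2 → ZMod 2, (∀ i, MvPolynomial.eval v (f i) = 0) → v = 0 := by
    intro v hv
    have hy : ∀ i, MvPolynomial.eval (fun j => φ (v j)) (MvPolynomial.map φ (f i)) = 0 := by
      intro i
      rw [MvPolynomial.eval_map]
      have h2 : φ (MvPolynomial.eval v (f i)) =
          MvPolynomial.eval₂ φ (fun j => φ (v j)) (f i) := by
        simpa [Function.comp_def] using MvPolynomial.eval₂_comp_left φ (RingHom.id (ZMod 2)) v (f i)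
      rw [← h2, hv i, map_zero]
    have h0 := hnz (fun j => φ (v j)) hy
    funext j
    have hj := congrFun h0 j
    rcases zmod2_cases (v j) with h | h
    · simpa [h]
    · rw [h] at hj
      exact absurd (by rw [map_one] at hj; exact hj) one_ne_zero
  -- values at 𝔽₂-points
  have key0 : ∀ a b c e : ZMod 2,
      a ^ 3 + b ^ 3 + c ^ 3 + a ^ 2 * b + b ^ 2 * c + c ^ 2 * a + a * b * c +
        c ^ 2 * e + c * e ^ 2 = 0 → a = 0 ∧ b = 0 ∧ c = 0 := by decide
  have hev : ∀ v : Fin 2 → ZMod 2,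
      MvPolynomial.eval v (f 0) ^ 3 + MvPolynomial.eval v (f 1) ^ 3 +
        MvPolynomial.eval v (f 2) ^ 3 +
        MvPolynomial.eval v (f 0) ^ 2 * MvPolynomial.eval v (f 1) +
        MvPolynomial.eval v (f 1) ^ 2 * MvPolynomial.eval v (f 2) +
        MvPolynomial.eval v (f 2) ^ 2 * MvPolynomial.eval v (f 0) +
        MvPolynomial.eval v (f 0) * MvPolynomial.eval v (f 1) * MvPolynomial.eval v (f 2) +
        MvPolynomial.eval v (f 2) ^ 2 * MvPolynomial.eval v (f 3) +
        MvPolynomial.eval v (f 2) * MvPolynomial.eval v (f 3) ^ 2 = 0 := by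
    intro v
    have := congrArg (MvPolynomial.eval v) hb
    simpa [map_add, map_mul, map_pow] using this
  have hvals : ∀ v : Fin 2 → ZMod 2, MvPolynomial.eval v (f 0) = 0 ∧
      MvPolynomial.eval v (f 1) = 0 ∧ MvPolynomial.eval v (f 2) = 0 :=
    fun v => key0 _ _ _ _ (hev v)
  have hf3 : ∀ v : Fin 2 → ZMod 2, v ≠ 0 → MvPolynomial.eval v (f 3) ≠ 0 := by
    intro v hv h3
    apply hv
    apply hcz
    intro i
    fin_cases i
    · exact (hvals v).1
    · exact (hvals v).2.1
    · exact (hvals v).2.2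
    · exact h3
  have hv01 : (![0, 1] : Fin 2 → ZMod 2) ≠ 0 := by
    intro h; have := congrFun h 1; simp at this
  have hv11 : (![1, 1] : Fin 2 → ZMod 2) ≠ 0 := by
    intro h; have := congrFun h 1; simp at this
  have hv10 : (![1, 0] : Fin 2 → ZMod 2) ≠ 0 := by
    intro h; have := congrFun h 0; simp at this
  -- identities after dehomogenization
  have hΦid : Φ (f 0) ^ 3 + Φ (f 1) ^ 3 + Φ (f 2) ^ 3 + Φ (f 0) ^ 2 * Φ (f 1) +
      Φ (f 1) ^ 2 * Φ (f 2) + Φ (f 2) ^ 2 * Φ (f 0) + Φ (f 0) * Φ (f 1) * Φ (f 2) +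
      Φ (f 2) ^ 2 * Φ (f 3) + Φ (f 2) * Φ (f 3) ^ 2 = 0 := by
    have := congrArg Φ hb
    simpa [map_add, map_mul, map_pow] using this
  have hΨid : Ψ (f 0) ^ 3 + Ψ (f 1) ^ 3 + Ψ (f 2) ^ 3 + Ψ (f 0) ^ 2 * Ψ (f 1) +
      Ψ (f 1) ^ 2 * Ψ (f 2) + Ψ (f 2) ^ 2 * Ψ (f 0) + Ψ (f 0) * Ψ (f 1) * Ψ (f 2) +
      Ψ (f 2) ^ 2 * Ψ (f 3) + Ψ (f 2) * Ψ (f 3) ^ 2 = 0 := by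
    have := congrArg Ψ hb
    simpa [map_add, map_mul, map_pow] using this
  -- divisibility at the three rational points
  have hXdvd : ∀ i : Fin 4, MvPolynomial.eval ![(0 : ZMod 2), 1] (f i) = 0 →
      Polynomial.X ∣ Φ (f i) := by
    intro i hp
    have hroot : (Φ (f i)).IsRoot 0 := by
      rw [Polynomial.IsRoot, eval_Phi]; exact hp
    simpa using (Polynomial.dvd_iff_isRoot (a := 0)).mpr hroot
  have hX1dvd : ∀ i : Fin 4, MvPolynomial.eval ![(1 : ZMod 2), 1] (f i) = 0 →
      (Polynomial.X - Polynomial.C 1) ∣ Φ (f i) := by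
    intro i hp
    refine (Polynomial.dvd_iff_isRoot (a := 1)).mpr ?_
    rw [Polynomial.IsRoot, eval_Phi]; exact hp
  have hXdvdΨ : ∀ i : Fin 4, MvPolynomial.eval ![(1 : ZMod 2), 0] (f i) = 0 →
      Polynomial.X ∣ Ψ (f i) := by
    intro i hp
    have hroot : (Ψ (f i)).IsRoot 0 := by
      rw [Polynomial.IsRoot, eval_Psi]; exact hp
    simpa using (Polynomial.dvd_iff_isRoot (a := 0)).mpr hroot
  have hnd1 : ¬ Polynomial.X ∣ Φ (f 3) := by
    rintro ⟨q, hq⟩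
    apply hf3 ![0, 1] hv01
    rw [← eval_Phi, hq]
    simp
  have hnd2 : ¬ (Polynomial.X - Polynomial.C 1) ∣ Φ (f 3) := by
    rintro ⟨q, hq⟩
    apply hf3 ![1, 1] hv11
    rw [← eval_Phi, hq]
    simp
  have hnd3 : ¬ Polynomial.X ∣ Ψ (f 3) := by
    rintro ⟨q, hq⟩
    apply hf3 ![1, 0] hv10
    rw [← eval_Psi, hq]
    simp
  have c1 : Polynomial.X ^ 3 ∣ Φ (f 2) :=
    cube_dvd _ _ _ _ _ Polynomial.prime_X
      (hXdvd 0 (hvals _).1) (hXdvd 1 (hvals _).2.1) (hXdvd 2 (hvals _).2.2) hnd1 hΦid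
  have c2 : (Polynomial.X - Polynomial.C 1) ^ 3 ∣ Φ (f 2) :=
    cube_dvd _ _ _ _ _ (Polynomial.prime_X_sub_C 1)
      (hX1dvd 0 (hvals _).1) (hX1dvd 1 (hvals _).2.1) (hX1dvd 2 (hvals _).2.2) hnd2 hΦid
  have c3 : Polynomial.X ^ 3 ∣ Ψ (f 2) :=
    cube_dvd _ _ _ _ _ Polynomial.prime_X
      (hXdvdΨ 0 (hvals _).1) (hXdvdΨ 1 (hvals _).2.1) (hXdvdΨ 2 (hvals _).2.2) hnd3 hΨid
  -- Φ (f 2) = 0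
  have hP2 : Φ (f 2) = 0 := by
    by_contra hne
    have hle_d : (Φ (f 2)).natDegree ≤ d := natDegree_Phi_le (hhom 2)
    have hcop : IsCoprime ((Polynomial.X : Polynomial (ZMod 2)) ^ 3)
        ((Polynomial.X - Polynomial.C 1) ^ 3) := by
      have h01 : IsCoprime (Polynomial.X - Polynomial.C (0 : ZMod 2))
          (Polynomial.X - Polynomial.C 1) :=
        Polynomial.isCoprime_X_sub_C_of_isUnit_sub (by
          rw [(by decide : (0 : ZMod 2) - 1 = 1)]; exact isUnit_one)
      simpa using h01.pow (m := 3) (n := 3)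
    have h6 : 6 ≤ (Φ (f 2)).natDegree := by
      have hdv := hcop.mul_dvd c1 c2
      have hle := Polynomial.natDegree_le_of_dvd hdv hne
      have hdeg : ((Polynomial.X : Polynomial (ZMod 2)) ^ 3 *
          (Polynomial.X - Polynomial.C 1) ^ 3).natDegree = 6 := by
        rw [Polynomial.natDegree_mul (pow_ne_zero _ Polynomial.X_ne_zero)
          (pow_ne_zero _ (Polynomial.X_sub_C_ne_zero 1)),
          Polynomial.natDegree_pow, Polynomial.natDegree_pow,
          Polynomial.natDegree_X, Polynomial.natDegree_X_sub_C]
      omega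
    have hd6 : 6 ≤ d := le_trans h6 hle_d
    have hup : (Φ (f 2)).natDegree ≤ d - 3 := by
      rw [Polynomial.natDegree_le_iff_coeff_eq_zero]
      intro N hN
      by_cases hNd : d < N
      · exact Polynomial.coeff_eq_zero_of_natDegree_lt (lt_of_le_of_lt hle_d hNd)
      · push_neg at hNd
        have c3' := Polynomial.X_pow_dvd_iff.mp c3 (d - N) (by omega)
        rw [← reflect_Phi (hhom 2), Polynomial.coeff_reflect,
          Polynomial.revAt_le (by omega : d - N ≤ d),
          (by omega : d - (d - N) = N)] at c3'
        exact c3'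
    omega
  -- norm-form step: Φ (f 0) = Φ (f 1) = 0
  have hNid : Φ (f 0) ^ 3 + Φ (f 0) ^ 2 * Φ (f 1) + Φ (f 1) ^ 3 = 0 := by
    rw [hP2] at hΦid
    linear_combination hΦid
  obtain ⟨hP0, hP1⟩ := norm_aniso _ _ hNid
  -- endgame
  by_cases hdeg0 : (Φ (f 3)).natDegree = 0
  · obtain ⟨c, hc⟩ := Polynomial.natDegree_eq_zero.mp hdeg0
    have hQ3 : Ψ (f 3) = Polynomial.C c * Polynomial.X ^ d := by
      rw [← reflect_Phi (hhom 3), ← hc]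
      rw [(by simp : (Polynomial.C c : Polynomial (ZMod 2)) =
        Polynomial.C c * Polynomial.X ^ 0)]
      rw [Polynomial.reflect_C_mul, Polynomial.reflect_monomial,
        Polynomial.revAt_le (Nat.zero_le d), Nat.sub_zero]
      ring
    apply hf3 ![1, 0] hv10
    rw [← eval_Psi, hQ3]
    simp [zero_pow (by omega : d ≠ 0)]
  · have hconst : (Polynomial.map φ (Φ (f 3))).natDegree ≠ 0 := by
      rw [Polynomial.natDegree_map]; exact hdeg0
    have hdegne : (Polynomial.map φ (Φ (f 3))).degree ≠ 0 := fun h =>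
      hconst (Polynomial.natDegree_eq_zero_iff_degree_le_zero.mpr (le_of_eq h))
    obtain ⟨r, hr⟩ := IsAlgClosed.exists_root _ hdegne
    have hall : ∀ i, MvPolynomial.eval ![r, (1 : K)] (MvPolynomial.map φ (f i)) = 0 := by
      intro i
      rw [evalK_Phi]
      fin_cases i
      · rw [show Φ (f (⟨0, by omega⟩ : Fin 4)) = 0 from hP0]; simp
      · rw [show Φ (f (⟨1, by omega⟩ : Fin 4)) = 0 from hP1]; simp
      · rw [show Φ (f (⟨2, by omega⟩ : Fin 4)) = 0 from hP2]; simp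
      · exact hr
    have hy := hnz ![r, (1 : K)] hall
    have h1 : (1 : K) = 0 := by simpa using congrFun hy 1
    exact one_ne_zero h1
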